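/- arXiv:1204.4921 — 2 statements merged into one kernel-verified Lean document; each statement's English description precedes it below -/
import Mathlib

section
/- Let f(x) = -ln(cos x), let b₁ < b₂ with b₂ - b₁ < π, and let c₁, c₂ ∈ ℝ. Then there exists exactly one x in the common domain (b₂ - π/2, b₁ + π/2) with f(x - b₁) + c₁ = f(x - b₂) + c₂; i.e., two translated grim reaper curves with overlapping (but distinct) vertical asymptote strips intersect in exactly one point. -/
open Real Set Filter Topology

theorem grim_reapers_intersect_exactly_once (b₁ b₂ c₁ c₂ : ℝ) (h : b₁ < b₂)
    (hπ : b₂ - b₁ < π) :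
    ∃! x : ℝ, x ∈ Ioo (b₂ - π/2) (b₁ + π/2) ∧
      -Real.log (Real.cos (x - b₁)) + c₁ = -Real.log (Real.cos (x - b₂)) + c₂ := by
  have hπ' := Real.pi_pos
  set a := b₂ - π/2 with ha
  set b := b₁ + π/2 with hb
  have hab : a < b := by rw [ha, hb]; linarith
  set g : ℝ → ℝ := fun x => Real.log (Real.cos (x - b₂)) - Real.log (Real.cos (x - b₁)) with hg
  have hcos₁ : ∀ x ∈ Ioo a b, 0 < Real.cos (x - b₁) := by
    intro x hx
    apply Real.cos_pos_of_mem_Ioo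
    constructor
    · have := hx.1; rw [ha] at this; linarith
    · have := hx.2; rw [hb] at this; linarith
  have hcos₂ : ∀ x ∈ Ioo a b, 0 < Real.cos (x - b₂) := by
    intro x hx
    apply Real.cos_pos_of_mem_Ioo
    constructor
    · have := hx.1; rw [ha] at this; linarith
    · have := hx.2; rw [hb] at this; linarith
  have hcont : ContinuousOn g (Ioo a b) := by
    apply ContinuousOn.sub
    · exact Real.continuousOn_log.comp
        ((Real.continuous_cos.comp (continuous_sub_right b₂)).continuousOn)
        (fun x hx => (hcos₂ x hx).ne')
    · exact Real.continuousOn_log.comp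
        ((Real.continuous_cos.comp (continuous_sub_right b₁)).continuousOn)
        (fun x hx => (hcos₁ x hx).ne')
  have hmono : StrictMonoOn g (Ioo a b) := by
    apply strictMonoOn_of_deriv_pos (convex_Ioo a b) hcont
    intro x hx
    rw [interior_Ioo] at hx
    have h1 : HasDerivAt (fun x : ℝ => Real.log (Real.cos (x - b₂)))
        (-Real.sin (x - b₂) / Real.cos (x - b₂)) x := by
      have := ((Real.hasDerivAt_cos (x - b₂)).comp x ((hasDerivAt_id x).sub_const b₂)).log
        (by exact (hcos₂ x hx).ne')
      simpa using this
    have h2 : HasDerivAt (fun x : ℝ => Real.log (Real.cos (x - b₁)))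
        (-Real.sin (x - b₁) / Real.cos (x - b₁)) x := by
      have := ((Real.hasDerivAt_cos (x - b₁)).comp x ((hasDerivAt_id x).sub_const b₁)).log
        (by exact (hcos₁ x hx).ne')
      simpa using this
    have hd : HasDerivAt g (-Real.sin (x - b₂) / Real.cos (x - b₂)
        - -Real.sin (x - b₁) / Real.cos (x - b₁)) x := h1.sub h2
    rw [hd.deriv]
    have ht : Real.tan (x - b₂) < Real.tan (x - b₁) := by
      have hx1 := hx.1; have hx2 := hx.2
      rw [ha] at hx1; rw [hb] at hx2
      apply Real.strictMonoOn_tan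
      · exact ⟨by linarith, by linarith⟩
      · exact ⟨by linarith, by linarith⟩
      · linarith
    rw [Real.tan_eq_sin_div_cos, Real.tan_eq_sin_div_cos] at ht
    simp only [neg_div] at *
    linarith
  -- limits
  have hlimb : Tendsto g (𝓝[Ioo a b] b) atTop := by
    have hc1 : Tendsto (fun x => Real.cos (x - b₁)) (𝓝[Ioo a b] b) (𝓝[>] 0) := by
      rw [tendsto_nhdsWithin_iff]
      constructor
      · have : Tendsto (fun x => Real.cos (x - b₁)) (𝓝 b) (𝓝 (Real.cos (b - b₁))) :=
          (Real.continuous_cos.comp (continuous_sub_right b₁)).tendsto b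
        rw [hb] at this ⊢
        simpa [Real.cos_pi_div_two] using this.mono_left nhdsWithin_le_nhds
      · exact eventually_nhdsWithin_of_forall (fun x hx => hcos₁ x hx)
    have hlog1 : Tendsto (fun x => Real.log (Real.cos (x - b₁))) (𝓝[Ioo a b] b) atBot :=
      Real.tendsto_log_nhdsGT_zero.comp hc1
    have hlog2 : Tendsto (fun x => Real.log (Real.cos (x - b₂))) (𝓝[Ioo a b] b)
        (𝓝 (Real.log (Real.cos (b - b₂)))) := by
      have hcb : (0:ℝ) < Real.cos (b - b₂) :=
        Real.cos_pos_of_mem_Ioo ⟨by rw [hb]; linarith, by rw [hb]; linarith⟩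
      have : ContinuousAt (fun x => Real.log (Real.cos (x - b₂))) b :=
        ContinuousAt.log ((Real.continuous_cos.comp (continuous_sub_right b₂)).continuousAt)
          hcb.ne'
      exact this.tendsto.mono_left nhdsWithin_le_nhds
    have hneg : Tendsto (fun x => -Real.log (Real.cos (x - b₁))) (𝓝[Ioo a b] b) atTop :=
      tendsto_neg_atTop_iff.mpr hlog1
    simpa [hg, sub_eq_add_neg] using hlog2.add_atTop hneg
  have hlima : Tendsto g (𝓝[Ioo a b] a) atBot := by
    have hc2 : Tendsto (fun x => Real.cos (x - b₂)) (𝓝[Ioo a b] a) (𝓝[>] 0) := by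
      rw [tendsto_nhdsWithin_iff]
      constructor
      · have : Tendsto (fun x => Real.cos (x - b₂)) (𝓝 a) (𝓝 (Real.cos (a - b₂))) :=
          (Real.continuous_cos.comp (continuous_sub_right b₂)).tendsto a
        rw [ha] at this ⊢
        simpa [Real.cos_pi_div_two] using this.mono_left nhdsWithin_le_nhds
      · exact eventually_nhdsWithin_of_forall (fun x hx => hcos₂ x hx)
    have hlog2 : Tendsto (fun x => Real.log (Real.cos (x - b₂))) (𝓝[Ioo a b] a) atBot :=
      Real.tendsto_log_nhdsGT_zero.comp hc2
    have hlog1 : Tendsto (fun x => Real.log (Real.cos (x - b₁))) (𝓝[Ioo a b] a)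
        (𝓝 (Real.log (Real.cos (a - b₁)))) := by
      have hca : (0:ℝ) < Real.cos (a - b₁) :=
        Real.cos_pos_of_mem_Ioo ⟨by rw [ha]; linarith, by rw [ha]; linarith⟩
      have : ContinuousAt (fun x => Real.log (Real.cos (x - b₁))) a :=
        ContinuousAt.log ((Real.continuous_cos.comp (continuous_sub_right b₁)).continuousAt)
          hca.ne'
      exact this.tendsto.mono_left nhdsWithin_le_nhds
    have hneg : Tendsto (fun x => -Real.log (Real.cos (x - b₁))) (𝓝[Ioo a b] a)
        (𝓝 (-Real.log (Real.cos (a - b₁)))) := hlog1.neg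
    simpa [hg, sub_eq_add_neg, add_comm] using hneg.add_atBot hlog2
  set c := c₂ - c₁ with hc
  have hne : (𝓝[Ioo a b] b).NeBot := by
    rw [← mem_closure_iff_nhdsWithin_neBot, closure_Ioo hab.ne]
    exact right_mem_Icc.2 hab.le
  have hne' : (𝓝[Ioo a b] a).NeBot := by
    rw [← mem_closure_iff_nhdsWithin_neBot, closure_Ioo hab.ne]
    exact left_mem_Icc.2 hab.le
  obtain ⟨x₂, hx₂m, hx₂⟩ : ∃ x ∈ Ioo a b, c < g x := by
    have := (hlimb.eventually (eventually_gt_atTop c)).and self_mem_nhdsWithin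
    obtain ⟨x, h1, h2⟩ := this.exists
    exact ⟨x, h2, h1⟩
  obtain ⟨x₁, hx₁m, hx₁⟩ : ∃ x ∈ Ioo a b, g x < c := by
    have := (hlima.eventually (eventually_lt_atBot c)).and self_mem_nhdsWithin
    obtain ⟨x, h1, h2⟩ := this.exists
    exact ⟨x, h2, h1⟩
  have hx12 : x₁ < x₂ := by
    by_contra hle
    push_neg at hle
    have := hmono.monotoneOn hx₂m hx₁m hle
    linarith
  obtain ⟨x, hxmem, hgx⟩ : ∃ x ∈ Icc x₁ x₂, g x = c := by
    have hsub : Icc x₁ x₂ ⊆ Ioo a b := Icc_subset_Ioo hx₁m.1 hx₂m.2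
    have := intermediate_value_Icc hx12.le (hcont.mono hsub)
    obtain ⟨x, hx, hgx⟩ := this ⟨hx₁.le, hx₂.le⟩
    exact ⟨x, hx, hgx⟩
  have hxab : x ∈ Ioo a b := Icc_subset_Ioo hx₁m.1 hx₂m.2 hxmem
  have hgx' : Real.log (Real.cos (x - b₂)) - Real.log (Real.cos (x - b₁)) = c := hgx
  refine ⟨x, ⟨hxab, by rw [hc] at hgx'; linarith⟩, ?_⟩
  rintro y ⟨hy, hey⟩
  have hgy : g y = c := by
    show Real.log (Real.cos (y - b₂)) - Real.log (Real.cos (y - b₁)) = c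
    rw [hc]; linarith
  exact hmono.injOn hy hxab (by rw [hgy, hgx])
end

section
/- Let f(x) = -ln(cos x) on (-π/2, π/2), let a = (a_x, a_y) ∈ ℝ² with a_x > 0, and for j ∈ ℤ let Γ_j denote the graph of x ↦ f(x - j·a_x) + j·a_y over (j·a_x - π/2, j·a_x + π/2). Suppose 0 < a_x < π/2 and a_x ≠ π/q for all positive integers q. Then for all integers i, j with 0 < i < j, the triple intersection Γ₀ ∩ Γ_i ∩ Γ_j is empty. -/
open Real Set

lemma negLogCos_hasDerivAt {x : ℝ} (hx : x ∈ Ioo (-(π/2)) (π/2)) :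
    HasDerivAt (fun t => -Real.log (Real.cos t)) (Real.tan x) x := by
  have hc : Real.cos x ≠ 0 := (Real.cos_pos_of_mem_Ioo hx).ne'
  have h1 : HasDerivAt (fun t => Real.log (Real.cos t)) ((Real.cos x)⁻¹ * -Real.sin x) x :=
    (Real.hasDerivAt_log hc).comp x (Real.hasDerivAt_cos x)
  have h2 := h1.neg
  refine h2.congr_deriv ?_
  rw [Real.tan_eq_sin_div_cos]
  field_simp
lemma strictConvexOn_negLogCos :
    StrictConvexOn ℝ (Ioo (-(π/2)) (π/2)) (fun t => -Real.log (Real.cos t)) := by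
  apply strictConvexOn_of_deriv2_pos (convex_Ioo _ _)
  · apply ContinuousOn.neg
    apply ContinuousOn.log (Real.continuous_cos.continuousOn)
    exact fun x hx => (Real.cos_pos_of_mem_Ioo hx).ne'
  · intro x hx
    rw [interior_Ioo] at hx
    have hderiv : Set.EqOn (deriv (fun t => -Real.log (Real.cos t))) Real.tan
        (Ioo (-(π/2)) (π/2)) := fun y hy => (negLogCos_hasDerivAt hy).deriv
    have h2 : deriv (deriv (fun t => -Real.log (Real.cos t))) x = deriv Real.tan x := by
      apply Filter.EventuallyEq.deriv_eq
      filter_upwards [isOpen_Ioo.mem_nhds hx] with y hy using hderiv hy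
    have hc : 0 < Real.cos x := Real.cos_pos_of_mem_Ioo hx
    simp only [Function.iterate_succ, Function.iterate_zero, Function.comp_apply, id]
    rw [h2, Real.deriv_tan]
    positivity

theorem no_triple_intersection (ax ay : ℝ) (hax₀ : 0 < ax) (hax₁ : ax < π / 2)
    (hq : ∀ q : ℕ, 0 < q → ax ≠ π / q) (i j : ℤ) (hi : 0 < i) (hij : i < j) :
    ({p : ℝ × ℝ | p.1 ∈ Ioo ((0 : ℝ) * ax - π/2) ((0 : ℝ) * ax + π/2) ∧
        p.2 = -Real.log (Real.cos (p.1 - (0 : ℝ) * ax)) + (0 : ℝ) * ay} ∩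
     {p : ℝ × ℝ | p.1 ∈ Ioo ((i : ℝ) * ax - π/2) ((i : ℝ) * ax + π/2) ∧
        p.2 = -Real.log (Real.cos (p.1 - (i : ℝ) * ax)) + (i : ℝ) * ay} ∩
     {p : ℝ × ℝ | p.1 ∈ Ioo ((j : ℝ) * ax - π/2) ((j : ℝ) * ax + π/2) ∧
        p.2 = -Real.log (Real.cos (p.1 - (j : ℝ) * ax)) + (j : ℝ) * ay}) = ∅ := by
  ext p
  simp only [mem_inter_iff, mem_setOf_eq, mem_empty_iff_false, iff_false, mem_Ioo]
  rintro ⟨⟨⟨⟨h0l, h0r⟩, hy0⟩, ⟨⟨hil, hir⟩, hyi⟩⟩, ⟨⟨hjl, hjr⟩, hyj⟩⟩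
  have hiR : (0 : ℝ) < (i : ℝ) := by exact_mod_cast hi
  have hjR : (i : ℝ) < (j : ℝ) := by exact_mod_cast hij
  have hjpos : (0 : ℝ) < (j : ℝ) := lt_trans hiR hjR
  have hx0 : p.1 ∈ Ioo (-(π/2)) (π/2) := by
    constructor <;> [linarith; linarith]
  have hxi : p.1 - (i : ℝ) * ax ∈ Ioo (-(π/2)) (π/2) := by
    constructor <;> [linarith; linarith]
  have hxj : p.1 - (j : ℝ) * ax ∈ Ioo (-(π/2)) (π/2) := by
    constructor <;> [linarith; linarith]
  set θ : ℝ := (i : ℝ) / (j : ℝ) with hθ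
  have hθ0 : 0 < θ := div_pos hiR hjpos
  have hθ1 : θ < 1 := (div_lt_one hjpos).mpr hjR
  have hne : p.1 - (j : ℝ) * ax ≠ p.1 := by
    have : (0:ℝ) < (j : ℝ) * ax := mul_pos hjpos hax₀
    intro h; linarith [sub_eq_iff_eq_add.mp h]
  have hθj : θ * (j : ℝ) = (i : ℝ) := div_mul_cancel₀ _ hjpos.ne'
  have key := strictConvexOn_negLogCos.2 hxj hx0 hne hθ0 (by linarith : (0:ℝ) < 1 - θ)
    (by ring)
  have key' : -Real.log (Real.cos (θ • (p.1 - (j : ℝ) * ax) + (1 - θ) • p.1)) <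
      θ * (-Real.log (Real.cos (p.1 - (j : ℝ) * ax)))
        + (1 - θ) * (-Real.log (Real.cos p.1)) := key
  have harg : θ • (p.1 - (j : ℝ) * ax) + (1 - θ) • p.1 = p.1 - (i : ℝ) * ax := by
    rw [smul_eq_mul, smul_eq_mul]
    linear_combination (-ax) * hθj
  rw [harg] at key'
  have e0 : -Real.log (Real.cos p.1) = p.2 := by
    rw [hy0]; ring_nf
  have ei : -Real.log (Real.cos (p.1 - (i : ℝ) * ax)) = p.2 - (i : ℝ) * ay := by
    rw [hyi]; ring
  have ej : -Real.log (Real.cos (p.1 - (j : ℝ) * ax)) = p.2 - (j : ℝ) * ay := by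
    rw [hyj]; ring
  rw [e0, ei, ej] at key'
  have : θ * (p.2 - (j : ℝ) * ay) + (1 - θ) * p.2 = p.2 - (i : ℝ) * ay := by
    linear_combination (-ay) * hθj
  linarith
end
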